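/- Let X be a compactum. For every capacity ν on X the density [ν]: X → [0,1], [ν](x) = ν({x}), is an upper semicontinuous function. Moreover, the assignment ν ↦ [ν] is a bijection between the possibility capacities on X and the upper semicontinuous functions f: X → [0,1] with max f = 1: every such f determines a possibility capacity (f) by (f)(F) = max{f(x) : x ∈ F} for closed F, and every possibility capacity ν satisfies ν = ([ν]). -/

import Mathlib

open Set TopologicalSpace

universe u v

/-- A (upper-semicontinuous) capacity on a topological space `X`:
a normalized monotone set function on the closed subsets, upper semicontinuous
in the sense of Zarichnyi–Nykyforchyn. -/
structure Capacity (X : Type u) [TopologicalSpace X] : Type u where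
  toFun : Closeds X → ℝ
  empty' : toFun ⊥ = 0
  univ' : toFun ⊤ = 1
  mono' : ∀ F G : Closeds X, F ≤ G → toFun F ≤ toFun G
  usc' : ∀ (F : Closeds X) (a : ℝ), toFun F < a →
    ∃ O : Set X, IsOpen O ∧ (F : Set X) ⊆ O ∧ ∀ B : Closeds X, (B : Set X) ⊆ O → toFun B < a

namespace Capacity

variable {X : Type u} [TopologicalSpace X]

/-- Value of a capacity on (the closure of) an arbitrary set; on closed sets this is
the value of the capacity. -/
def cval (ν : Capacity X) (A : Set X) : ℝ := ν.toFun ⟨closure A, isClosed_closure⟩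

/-- The sup-extension of a capacity to open sets:
`ν(U) = sup {ν K : K closed, K ⊆ U}`. -/
noncomputable def oval (ν : Capacity X) (U : Set X) : ℝ :=
  sSup {r : ℝ | ∃ K : Closeds X, (K : Set X) ⊆ U ∧ ν.toFun K = r}

end Capacity

/-- The topology on the space `MX` of capacities, generated by the subbase
`O₋(F,a) = {c : c(F) < a}` (`F` closed) and `O₊(U,a) = {c : c(U) > a}` (`U` open). -/
instance capacityTopology (X : Type u) [TopologicalSpace X] : TopologicalSpace (Capacity X) :=
  TopologicalSpace.generateFrom
    ({S | ∃ (F : Closeds X) (a : ℝ), a ∈ Icc (0:ℝ) 1 ∧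
        S = {c : Capacity X | c.toFun F < a}} ∪
     {S | ∃ U : Set X, IsOpen U ∧ ∃ a ∈ Icc (0:ℝ) 1,
        S = {c : Capacity X | a < c.oval U}})

/-- A possibility capacity: `ν(A ∪ B) = max (ν A) (ν B)` on closed sets. -/
def IsPossibility {X : Type u} [TopologicalSpace X] (ν : Capacity X) : Prop :=
  ∀ A B : Closeds X, ν.toFun (A ⊔ B) = max (ν.toFun A) (ν.toFun B)

/-- A necessity capacity: `ν(A ∩ B) = min (ν A) (ν B)` on closed sets. -/
def IsNecessity {X : Type u} [TopologicalSpace X] (ν : Capacity X) : Prop :=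
  ∀ A B : Closeds X, ν.toFun (A ⊓ B) = min (ν.toFun A) (ν.toFun B)

/-- A triangular norm on `[0,1]`. -/
structure Tnorm : Type where
  toFun : ℝ → ℝ → ℝ
  mem' : ∀ s ∈ Icc (0:ℝ) 1, ∀ t ∈ Icc (0:ℝ) 1, toFun s t ∈ Icc (0:ℝ) 1
  comm' : ∀ s ∈ Icc (0:ℝ) 1, ∀ t ∈ Icc (0:ℝ) 1, toFun s t = toFun t s
  assoc' : ∀ s ∈ Icc (0:ℝ) 1, ∀ t ∈ Icc (0:ℝ) 1, ∀ r ∈ Icc (0:ℝ) 1,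
    toFun (toFun s t) r = toFun s (toFun t r)
  mono' : ∀ s₁ ∈ Icc (0:ℝ) 1, ∀ s₂ ∈ Icc (0:ℝ) 1, ∀ t₁ ∈ Icc (0:ℝ) 1, ∀ t₂ ∈ Icc (0:ℝ) 1,
    s₁ ≤ s₂ → t₁ ≤ t₂ → toFun s₁ t₁ ≤ toFun s₂ t₂
  one' : ∀ s ∈ Icc (0:ℝ) 1, toFun s 1 = s

/-- Continuity of a t-norm (on the unit square). -/
def Tnorm.Cont (star : Tnorm) : Prop :=
  ContinuousOn (fun q : ℝ × ℝ => star.toFun q.1 q.2) (Icc 0 1 ×ˢ Icc 0 1)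

/-- The t-normed (fuzzy) integral `∫^{∨∗} f dν = sup { ν(f⁻¹[t,1]) ∗ t : t ∈ [0,1] }`. -/
noncomputable def tInt {X : Type u} [TopologicalSpace X] (star : Tnorm) (ν : Capacity X) (f : X → ℝ) : ℝ :=
  sSup {r : ℝ | ∃ t ∈ Icc (0:ℝ) 1, r = star.toFun (ν.cval (f ⁻¹' Icc t 1)) t}

section Aux

variable {X : Type u} [TopologicalSpace X]

lemma Capacity.ext' {ν μ : Capacity X} (h : ν.toFun = μ.toFun) : ν = μ := by
  cases ν; cases μ; simpa using h

lemma Capacity.cval_eq (ν : Capacity X) {A : Set X} (h : IsClosed A) :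
    ν.cval A = ν.toFun ⟨A, h⟩ := by
  unfold Capacity.cval
  congr 1
  exact Closeds.ext h.closure_eq

lemma Capacity.nonneg (ν : Capacity X) (K : Closeds X) : 0 ≤ ν.toFun K :=
  ν.empty' ▸ ν.mono' ⊥ K bot_le

lemma Capacity.le_one (ν : Capacity X) (K : Closeds X) : ν.toFun K ≤ 1 :=
  ν.univ' ▸ ν.mono' K ⊤ le_top

lemma Capacity.finset_sup_lt {ι : Type v} (ν : Capacity X) (hp : IsPossibility ν)
    (t : Finset ι) (g : ι → Closeds X) {a : ℝ} (ha : 0 < a)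
    (h : ∀ i ∈ t, ν.toFun (g i) < a) : ν.toFun (t.sup g) < a := by
  induction t using Finset.cons_induction with
  | empty => simpa [ν.empty'] using ha
  | cons i t hit ih =>
      rw [Finset.sup_cons, hp]
      exact max_lt (h i (Finset.mem_cons_self i t))
        (ih fun j hj => h j (Finset.mem_cons_of_mem hj))

lemma sSup_image_bddAbove (f : X → ℝ) (h01 : ∀ x, f x ∈ Icc (0:ℝ) 1) (A : Set X) :
    BddAbove (f '' A) := by
  refine ⟨1, fun r hr => ?_⟩
  obtain ⟨x, -, rfl⟩ := hr
  exact (h01 x).2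

lemma sSup_image_nonneg (f : X → ℝ) (h01 : ∀ x, f x ∈ Icc (0:ℝ) 1) (A : Set X) :
    0 ≤ sSup (f '' A) :=
  Real.sSup_nonneg fun r hr => by obtain ⟨x, -, rfl⟩ := hr; exact (h01 x).1

lemma sSup_image_mono (f : X → ℝ) (h01 : ∀ x, f x ∈ Icc (0:ℝ) 1) {A B : Set X}
    (hAB : A ⊆ B) : sSup (f '' A) ≤ sSup (f '' B) := by
  rcases A.eq_empty_or_nonempty with rfl | hA
  · simpa [Real.sSup_empty] using sSup_image_nonneg f h01 B
  · exact csSup_le_csSup (sSup_image_bddAbove f h01 B) (hA.image f) (image_mono (f := f) hAB)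

/-- The possibility capacity determined by an upper semicontinuous density `f`. -/
noncomputable def Capacity.ofDensity (f : X → ℝ) (hf : UpperSemicontinuous f)
    (h01 : ∀ x, f x ∈ Icc (0:ℝ) 1) (h1 : ∃ x, f x = 1) : Capacity X where
  toFun K := sSup (f '' (K : Set X))
  empty' := by simp [Real.sSup_empty]
  univ' := by
    obtain ⟨x, hx⟩ := h1
    refine le_antisymm (csSup_le ⟨f x, ⟨x, trivial, rfl⟩⟩
      (fun r hr => by obtain ⟨y, -, rfl⟩ := hr; exact (h01 y).2)) ?_
    exact hx ▸ le_csSup (sSup_image_bddAbove f h01 _) ⟨x, trivial, rfl⟩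
  mono' F G hFG := sSup_image_mono f h01 hFG
  usc' K a ha := by
    have h0 : (0:ℝ) < a := lt_of_le_of_lt (sSup_image_nonneg f h01 _) ha
    obtain ⟨a', ha1, ha2⟩ := exists_between ha
    refine ⟨f ⁻¹' Iio a', upperSemicontinuous_iff_isOpen_preimage.mp hf a', ?_, ?_⟩
    · intro x hx
      exact lt_of_le_of_lt (le_csSup (sSup_image_bddAbove f h01 _) ⟨x, hx, rfl⟩) ha1
    · intro B hB
      rcases (B : Set X).eq_empty_or_nonempty with hBe | hBn
      · simpa [hBe, Real.sSup_empty] using h0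
      · refine lt_of_le_of_lt (csSup_le (hBn.image f) ?_) ha2
        rintro r ⟨x, hx, rfl⟩
        exact le_of_lt (hB hx)

lemma Capacity.ofDensity_isPossibility (f : X → ℝ) (hf : UpperSemicontinuous f)
    (h01 : ∀ x, f x ∈ Icc (0:ℝ) 1) (h1 : ∃ x, f x = 1) :
    IsPossibility (Capacity.ofDensity f hf h01 h1) := by
  intro A B
  show sSup (f '' ((A : Set X) ∪ (B : Set X))) =
    max (sSup (f '' (A : Set X))) (sSup (f '' (B : Set X)))
  rw [image_union]
  rcases (A : Set X).eq_empty_or_nonempty with hA | hA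
  · rw [hA]
    simp [Real.sSup_empty, max_eq_right (sSup_image_nonneg f h01 (B : Set X))]
  rcases (B : Set X).eq_empty_or_nonempty with hB | hB
  · rw [hB]
    simp [Real.sSup_empty, max_eq_left (sSup_image_nonneg f h01 (A : Set X))]
  rw [csSup_union (sSup_image_bddAbove f h01 _) (hA.image f)
    (sSup_image_bddAbove f h01 _) (hB.image f)]

end Aux

/-- the density `[ν](x) = ν({x})` of any capacity is upper semicontinuous,
and `ν ↦ [ν]` is a bijection between possibility capacities and upper semicontinuous
`f : X → [0,1]` with `max f = 1`: each such `f` determines a unique possibility capacity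
`(f)` with `(f)(F) = max {f x : x ∈ F}`, and every possibility capacity `ν` is recovered
from its density via `ν(F) = max {[ν](x) : x ∈ F}`. -/
theorem density_usc_and_bijection (X : Type u) [TopologicalSpace X]
    [CompactSpace X] [T2Space X] :
    (∀ ν : Capacity X, UpperSemicontinuous (fun x : X => ν.cval {x})) ∧
    (∀ f : X → ℝ, UpperSemicontinuous f → (∀ x, f x ∈ Icc (0:ℝ) 1) → (∃ x, f x = 1) →
      ∃! ν : Capacity X, IsPossibility ν ∧
        ∀ F : Set X, IsClosed F → ν.cval F = sSup (f '' F)) ∧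
    (∀ ν : Capacity X, IsPossibility ν →
      ∀ F : Set X, IsClosed F → ν.cval F = sSup ((fun x : X => ν.cval {x}) '' F)) := by
  have cval_single : ∀ (ν : Capacity X) (x : X),
      ν.cval {x} = ν.toFun ⟨{x}, isClosed_singleton⟩ :=
    fun ν x => ν.cval_eq isClosed_singleton
  refine ⟨?_, ?_, ?_⟩
  · -- Part 1: the density is upper semicontinuous
    intro ν x a ha
    simp only [cval_single] at ha
    obtain ⟨O, hO, hxO, hO'⟩ := ν.usc' ⟨{x}, isClosed_singleton⟩ a ha
    have hx : x ∈ O := singleton_subset_iff.mp hxO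
    filter_upwards [hO.mem_nhds hx] with y hy
    simp only [cval_single]
    exact hO' ⟨{y}, isClosed_singleton⟩ (singleton_subset_iff.mpr hy)
  · -- Part 2: existence and uniqueness of the possibility capacity with density f
    intro f hf h01 h1
    refine ⟨Capacity.ofDensity f hf h01 h1, ⟨Capacity.ofDensity_isPossibility f hf h01 h1,
      fun F hF => ?_⟩, ?_⟩
    · rw [Capacity.cval_eq _ hF]; rfl
    · rintro ν ⟨-, hν⟩
      refine Capacity.ext' (funext fun K => ?_)
      have := hν (K : Set X) K.isClosed
      rw [ν.cval_eq K.isClosed] at this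
      exact this
  · -- Part 3: recovering a possibility capacity from its density
    intro ν hp F hF
    rcases F.eq_empty_or_nonempty with rfl | hFn
    · rw [ν.cval_eq isClosed_empty]
      have : (⟨∅, isClosed_empty⟩ : Closeds X) = ⊥ := rfl
      rw [this, ν.empty', image_empty, Real.sSup_empty]
    · have hbdd : BddAbove ((fun x : X => ν.cval {x}) '' F) := by
        refine ⟨1, fun r hr => ?_⟩
        obtain ⟨x, -, rfl⟩ := hr
        simp only [cval_single]
        exact ν.le_one _
      refine le_antisymm ?_ ?_
      · -- the hard direction: ν F ≤ sup of densities
        by_contra h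
        push_neg at h
        obtain ⟨a, ha1, ha2⟩ := exists_between h
        have h0a : (0 : ℝ) < a :=
          lt_of_le_of_lt (Real.sSup_nonneg fun r hr => by
            obtain ⟨x, -, rfl⟩ := hr
            simp only [cval_single]; exact ν.nonneg _) ha1
        -- for every point, a small closed set of capacity < a, a nbhd if the point is in F
        have key : ∀ x : X, ∃ C : Closeds X, ν.toFun C < a ∧
            (x ∈ F → (C : Set X) ∈ nhds x) := by
          intro x
          by_cases hx : x ∈ F
          · have hsing : ν.toFun ⟨{x}, isClosed_singleton⟩ < a := by
              refine lt_of_le_of_lt ?_ ha1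
              rw [← cval_single ν x]
              exact le_csSup hbdd ⟨x, hx, rfl⟩
            obtain ⟨O, hO, hxO, hO'⟩ := ν.usc' ⟨{x}, isClosed_singleton⟩ a hsing
            have hOx : O ∈ nhds x := hO.mem_nhds (singleton_subset_iff.mp hxO)
            obtain ⟨V, hVx, hVc, hVO⟩ := exists_mem_nhds_isClosed_subset hOx
            exact ⟨⟨V, hVc⟩, hO' ⟨V, hVc⟩ hVO, fun _ => hVx⟩
          · exact ⟨⊥, by simpa [ν.empty'] using h0a, fun hx' => absurd hx' hx⟩
        choose C hC1 hC2 using key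
        obtain ⟨t, -, ht⟩ := hF.isCompact.elim_nhds_subcover (fun x => (C x : Set X))
          (fun x hx => hC2 x hx)
        have hFK : F ⊆ ((t.sup C : Closeds X) : Set X) := by
          intro x hx
          obtain ⟨i, hi, hxi⟩ := mem_iUnion₂.mp (ht hx)
          exact (SetLike.coe_subset_coe.mpr (Finset.le_sup hi)) hxi
        have : ν.cval F < a := by
          rw [ν.cval_eq hF]
          exact lt_of_le_of_lt (ν.mono' ⟨F, hF⟩ (t.sup C) hFK)
            (ν.finset_sup_lt hp t C h0a fun i _ => hC1 i)
        exact absurd (lt_trans ha2 this) (lt_irrefl _)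
      · refine csSup_le (hFn.image _) ?_
        rintro r ⟨x, hx, rfl⟩
        simp only [cval_single, ν.cval_eq hF]
        exact ν.mono' _ _ (singleton_subset_iff.mpr hx)
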